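/- arXiv:1510.02228 — 2 statements merged into one kernel-verified Lean document; each statement's English description precedes it below -/
import Mathlib

section
/- Let u be a C¹ vector field on an open set of ℝ³ and f a C² function of (t, x₁, x₂). Define N = (−∂₁f, −∂₂f, 1) and let ū(t,x') = u(t, x', f(t,x')) denote the trace of u on the graph x₃ = f. Then at points on the graph: (u·∇u)·N − (∂₃u·N)(u·N) = ū₁ ∂₁(ū·N) + ū₂ ∂₂(ū·N) + Σ_{i,j=1,2} ū_i ū_j ∂_i∂_j f, where ∂₁, ∂₂ on the left act on the spatial variables of u while on the right they are derivatives in x' applied to the composed functions. -/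
noncomputable section

/-- partial derivative in the `i`-th coordinate direction, ℝ³ domain -/
def pd3 (i : Fin 3) (g : (Fin 3 → ℝ) → ℝ) (x : Fin 3 → ℝ) : ℝ :=
  fderiv ℝ g x (Pi.single i 1)

/-- partial derivative in the `i`-th coordinate direction, ℝ² domain -/
def pd2 (i : Fin 2) (g : (Fin 2 → ℝ) → ℝ) (x : Fin 2 → ℝ) : ℝ :=
  fderiv ℝ g x (Pi.single i 1)

/-- the point `(x', z)` of ℝ³ -/
def emb (x' : Fin 2 → ℝ) (z : ℝ) : Fin 3 → ℝ := ![x' 0, x' 1, z]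

/-- the (non-normalized) normal `N = (−∂₁f, −∂₂f, 1)` of the graph of `f` -/
def Nf (f : (Fin 2 → ℝ) → ℝ) (y : Fin 2 → ℝ) : Fin 3 → ℝ :=
  ![-(pd2 0 f y), -(pd2 1 f y), 1]


lemma hasFDerivAt_phi {f : (Fin 2 → ℝ) → ℝ} {x' : Fin 2 → ℝ} (hfd : DifferentiableAt ℝ f x') :
    HasFDerivAt (fun y => emb y (f y))
      (ContinuousLinearMap.pi ![ContinuousLinearMap.proj 0, ContinuousLinearMap.proj 1, fderiv ℝ f x']) x' := by
  rw [hasFDerivAt_pi']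
  intro j
  rw [ContinuousLinearMap.proj_pi]
  fin_cases j
  · exact hasFDerivAt_apply 0 x'
  · exact hasFDerivAt_apply 1 x'
  · exact hfd.hasFDerivAt

lemma pd2_comp {f : (Fin 2 → ℝ) → ℝ} {x' : Fin 2 → ℝ} (g : (Fin 3 → ℝ) → ℝ)
    (hg : DifferentiableAt ℝ g (emb x' (f x'))) (hfd : DifferentiableAt ℝ f x') (i : Fin 2) :
    pd2 i (fun y => g (emb y (f y))) x'
      = pd3 i.castSucc g (emb x' (f x')) + pd2 i f x' * pd3 2 g (emb x' (f x')) := by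
  have hφ := hasFDerivAt_phi hfd
  have h2 : HasFDerivAt (fun y => g (emb y (f y)))
      ((fderiv ℝ g (emb x' (f x'))).comp
        (ContinuousLinearMap.pi ![ContinuousLinearMap.proj 0, ContinuousLinearMap.proj 1, fderiv ℝ f x'])) x' :=
    hg.hasFDerivAt.comp x' hφ
  rw [pd2, h2.fderiv, ContinuousLinearMap.comp_apply]
  have hv : (ContinuousLinearMap.pi ![ContinuousLinearMap.proj 0, ContinuousLinearMap.proj 1, fderiv ℝ f x'])
      (Pi.single i 1)
      = (Pi.single (i.castSucc) 1 : Fin 3 → ℝ) + pd2 i f x' • (Pi.single 2 1 : Fin 3 → ℝ) := by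
    funext j
    fin_cases i <;> fin_cases j <;>
      simp [ContinuousLinearMap.pi_apply, Pi.single_apply, pd2, Fin.castSucc, Fin.ext_iff]
  rw [hv, map_add, map_smul]
  rfl

lemma pd2_add {g h : (Fin 2 → ℝ) → ℝ} {x' : Fin 2 → ℝ} (i : Fin 2)
    (hg : DifferentiableAt ℝ g x') (hh : DifferentiableAt ℝ h x') :
    pd2 i (fun y => g y + h y) x' = pd2 i g x' + pd2 i h x' := by
  simp [pd2, fderiv_fun_add hg hh]

lemma pd2_mul {g h : (Fin 2 → ℝ) → ℝ} {x' : Fin 2 → ℝ} (i : Fin 2)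
    (hg : DifferentiableAt ℝ g x') (hh : DifferentiableAt ℝ h x') :
    pd2 i (fun y => g y * h y) x' = g x' * pd2 i h x' + h x' * pd2 i g x' := by
  simp [pd2, fderiv_fun_mul hg hh]

lemma pd2_neg {g : (Fin 2 → ℝ) → ℝ} {x' : Fin 2 → ℝ} (i : Fin 2) :
    pd2 i (fun y => -(g y)) x' = -(pd2 i g x') := by
  simp [pd2, fderiv_neg]

lemma pd2_const {x' : Fin 2 → ℝ} (i : Fin 2) (c : ℝ) :
    pd2 i (fun _ => c) x' = 0 := by
  simp [pd2]

lemma diff_pd2 {f : (Fin 2 → ℝ) → ℝ} (hf : ContDiff ℝ 2 f) (j : Fin 2) :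
    Differentiable ℝ (pd2 j f) := by
  have h1 : ContDiff ℝ 1 (fderiv ℝ f) := hf.fderiv_right (le_refl 2)
  exact ((ContinuousLinearMap.apply ℝ ℝ (Pi.single j (1:ℝ))).differentiable).comp
    (h1.differentiable one_ne_zero)

lemma key {u : (Fin 3 → ℝ) → Fin 3 → ℝ} {f : (Fin 2 → ℝ) → ℝ} {x' : Fin 2 → ℝ}
    (hu : ContDiff ℝ 1 u) (hf : ContDiff ℝ 2 f) (i : Fin 2) :
    pd2 i (fun y => ∑ j : Fin 3, u (emb y (f y)) j * Nf f y j) x'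
    = (pd3 i.castSucc (fun z => u z 0) (emb x' (f x'))
          + pd2 i f x' * pd3 2 (fun z => u z 0) (emb x' (f x'))) * (-(pd2 0 f x'))
      + u (emb x' (f x')) 0 * (-(pd2 i (pd2 0 f) x'))
      + (pd3 i.castSucc (fun z => u z 1) (emb x' (f x'))
          + pd2 i f x' * pd3 2 (fun z => u z 1) (emb x' (f x'))) * (-(pd2 1 f x'))
      + u (emb x' (f x')) 1 * (-(pd2 i (pd2 1 f) x'))
      + (pd3 i.castSucc (fun z => u z 2) (emb x' (f x'))
          + pd2 i f x' * pd3 2 (fun z => u z 2) (emb x' (f x'))) := by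
  have hfd : Differentiable ℝ f := hf.differentiable two_ne_zero
  have hud : Differentiable ℝ u := hu.differentiable one_ne_zero
  have huj : ∀ j : Fin 3, Differentiable ℝ (fun z => u z j) := fun j =>
    (ContinuousLinearMap.proj j : ((Fin 3 → ℝ) →L[ℝ] ℝ)).differentiable.comp hud
  have hφ : Differentiable ℝ (fun y => emb y (f y)) := fun y =>
    (hasFDerivAt_phi (hfd y)).differentiableAt
  have hubar : ∀ j : Fin 3, Differentiable ℝ (fun y => u (emb y (f y)) j) := fun j =>
    (huj j).comp hφ
  have efun : (fun y => ∑ j : Fin 3, u (emb y (f y)) j * Nf f y j)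
      = (fun y => (u (emb y (f y)) 0 * (-(pd2 0 f y))
          + u (emb y (f y)) 1 * (-(pd2 1 f y)))
          + u (emb y (f y)) 2 * 1) := by
    funext y
    simp [Fin.sum_univ_three, Nf]
  rw [efun]
  have h0 : DifferentiableAt ℝ (fun y => u (emb y (f y)) 0 * -(pd2 0 f y)) x' :=
    ((hubar 0).mul ((diff_pd2 hf 0).neg)).differentiableAt
  have h1 : DifferentiableAt ℝ (fun y => u (emb y (f y)) 1 * -(pd2 1 f y)) x' :=
    ((hubar 1).mul ((diff_pd2 hf 1).neg)).differentiableAt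
  have h2 : DifferentiableAt ℝ (fun y => u (emb y (f y)) 2 * (1:ℝ)) x' :=
    ((hubar 2).mul (differentiable_const 1)).differentiableAt
  rw [pd2_add i (h0.fun_add h1) h2, pd2_add i h0 h1,
    pd2_mul i ((hubar 0) x') ((diff_pd2 hf 0).fun_neg x'),
    pd2_mul i ((hubar 1) x') ((diff_pd2 hf 1).fun_neg x'),
    pd2_mul i ((hubar 2) x') (differentiableAt_const 1),
    pd2_neg, pd2_neg, pd2_const,
    pd2_comp (fun z => u z 0) ((huj 0) _) (hfd x') i,
    pd2_comp (fun z => u z 1) ((huj 1) _) (hfd x') i,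
    pd2_comp (fun z => u z 2) ((huj 2) _) (hfd x') i]
  ring


/-- Lemma on traces: `(u·∇u)·N − (∂₃u·N)(u·N) =
ū₁ ∂₁(ū·N) + ū₂ ∂₂(ū·N) + Σ_{i,j=1,2} ū_i ū_j ∂_i∂_j f` on the graph `x₃ = f`. -/
theorem stmt2 (u : (Fin 3 → ℝ) → Fin 3 → ℝ) (f : (Fin 2 → ℝ) → ℝ)
    (hu : ContDiff ℝ 1 u) (hf : ContDiff ℝ 2 f) (x' : Fin 2 → ℝ) :
    (∑ j : Fin 3, (∑ k : Fin 3,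
        u (emb x' (f x')) k * pd3 k (fun z => u z j) (emb x' (f x'))) * Nf f x' j)
      - (∑ j : Fin 3, pd3 2 (fun z => u z j) (emb x' (f x')) * Nf f x' j)
        * (∑ j : Fin 3, u (emb x' (f x')) j * Nf f x' j)
    = u (emb x' (f x')) 0
        * pd2 0 (fun y => ∑ j : Fin 3, u (emb y (f y)) j * Nf f y j) x'
      + u (emb x' (f x')) 1
        * pd2 1 (fun y => ∑ j : Fin 3, u (emb y (f y)) j * Nf f y j) x'
      + ∑ i : Fin 2, ∑ j : Fin 2,
          u (emb x' (f x')) (Fin.castSucc i) * u (emb x' (f x')) (Fin.castSucc j)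
            * pd2 i (fun y => pd2 j f y) x' := by
  rw [key hu hf 0, key hu hf 1]
  simp only [Fin.sum_univ_three, Fin.sum_univ_two, Fin.castSucc_zero, Fin.castSucc_one,
    Nf, Matrix.cons_val_zero, Matrix.cons_val_one, Matrix.head_cons, Matrix.cons_val_two,
    Matrix.tail_cons]
  ring
end
end

section
/- Let u, h be C² time-dependent divergence-free vector fields on a neighborhood of Γ⁺ = 𝕋² × {1} with u₃ = h₃ = 0 on Γ⁺, and let ξ solve ∂_t ξ + u·∇ξ − h·∇ω = ξ·∇u − ω·∇h − 2∇u_i × ∇h_i. Then d/dt ∫_{Γ⁺} ξ₃ dx' = 0; in particular ∫_{Γ⁺}(∂₁u_i ∂₂h_i − ∂₂u_i ∂₁h_i) dx' = 0 for smooth periodic u, h. -/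
open MeasureTheory

noncomputable section

def Q2 : Set (Fin 2 → ℝ) := Set.Icc (fun _ => (0:ℝ)) (fun _ => 2*Real.pi)

def pt (g : ℝ × (Fin 3 → ℝ) → ℝ) (p : ℝ × (Fin 3 → ℝ)) : ℝ :=
  fderiv ℝ g p ((1 : ℝ), (0 : Fin 3 → ℝ))

def pxi (i : Fin 3) (g : ℝ × (Fin 3 → ℝ) → ℝ) (p : ℝ × (Fin 3 → ℝ)) : ℝ :=
  fderiv ℝ g p ((0 : ℝ), Pi.single i 1)

def levi (i j k : Fin 3) : ℝ :=
  (((i : ℕ) : ℝ) - ((j : ℕ) : ℝ)) * (((j : ℕ) : ℝ) - ((k : ℕ) : ℝ))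
    * (((k : ℕ) : ℝ) - ((i : ℕ) : ℝ)) / 2

def Per3 (F : ℝ × (Fin 3 → ℝ) → Fin 3 → ℝ) : Prop :=
  ∀ (t : ℝ) (x : Fin 3 → ℝ) (j : Fin 2),
    F (t, x + Pi.single (Fin.castSucc j) (2*Real.pi)) = F (t, x)

namespace Stmt7

/-! ### Linear-algebraic description of the boundary slice -/

def M : (Fin 2 → ℝ) →L[ℝ] (Fin 3 → ℝ) :=
  ContinuousLinearMap.pi ![ContinuousLinearMap.proj 0, ContinuousLinearMap.proj 1, 0]

lemma emb_eq (y : Fin 2 → ℝ) : emb y 1 = M y + Pi.single 2 1 := by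
  funext i; fin_cases i <;>
    simp [emb, M, Pi.single_apply, ContinuousLinearMap.pi_apply]

lemma M_single (j : Fin 2) : M (Pi.single j 1) = Pi.single (Fin.castSucc j) 1 := by
  fin_cases j <;> (funext i; fin_cases i) <;>
    simp [M, Pi.single_apply, ContinuousLinearMap.pi_apply, Fin.castSucc]

lemma emb_add (y : Fin 2 → ℝ) (j : Fin 2) (a : ℝ) :
    emb (y + Pi.single j a) 1 = emb y 1 + Pi.single (Fin.castSucc j) a := by
  fin_cases j <;> (funext i; fin_cases i) <;>
    simp [emb, Pi.single_apply, Fin.castSucc, Fin.ext_iff]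

def B : (Fin 2 → ℝ) →L[ℝ] ℝ × (Fin 3 → ℝ) :=
  ContinuousLinearMap.prod 0 M

lemma hasFDerivAt_slice (t : ℝ) (y : Fin 2 → ℝ) :
    HasFDerivAt (fun y => ((t, emb y 1) : ℝ × (Fin 3 → ℝ))) B y := by
  have h : HasFDerivAt (fun y : Fin 2 → ℝ => ((t, M y + Pi.single 2 1) : ℝ × (Fin 3 → ℝ)))
      ((0 : (Fin 2 → ℝ) →L[ℝ] ℝ).prod M) y :=
    (hasFDerivAt_const t y).prodMk ((M.hasFDerivAt).add_const _)
  simpa [B, emb_eq] using h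

lemma contDiff_slice (t : ℝ) {n : WithTop ℕ∞} :
    ContDiff ℝ n (fun y => ((t, emb y 1) : ℝ × (Fin 3 → ℝ))) := by
  have h : ContDiff ℝ n (fun y : Fin 2 → ℝ => ((t, M y + Pi.single 2 1) : ℝ × (Fin 3 → ℝ))) :=
    contDiff_const.prodMk (M.contDiff.add contDiff_const)
  simpa [emb_eq] using h

lemma slice_comp {n : WithTop ℕ∞} (g : ℝ × (Fin 3 → ℝ) → ℝ) (hg : ContDiff ℝ n g) (t : ℝ) :
    ContDiff ℝ n (fun y => g (t, emb y 1)) :=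
  hg.comp (contDiff_slice t)

lemma pderiv_slice (g : ℝ × (Fin 3 → ℝ) → ℝ) (hg : Differentiable ℝ g) (t : ℝ)
    (y : Fin 2 → ℝ) (j : Fin 2) :
    fderiv ℝ (fun y => g (t, emb y 1)) y (Pi.single j 1)
      = pxi (Fin.castSucc j) g (t, emb y 1) := by
  have h := ((hg (t, emb y 1)).hasFDerivAt.comp y (hasFDerivAt_slice t y)).fderiv
  rw [show (fun y => g (t, emb y 1)) = g ∘ (fun y => ((t, emb y 1) : ℝ × (Fin 3 → ℝ))) from rfl, h]
  simp only [ContinuousLinearMap.coe_comp', Function.comp_apply, B,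
    ContinuousLinearMap.prod_apply, ContinuousLinearMap.zero_apply, M_single, pxi]

lemma hasDerivAt_slice_t (g : ℝ × (Fin 3 → ℝ) → ℝ) (hg : Differentiable ℝ g)
    (c : Fin 3 → ℝ) (t : ℝ) :
    HasDerivAt (fun τ => g (τ, c)) (pt g (t, c)) t := by
  have hγ : HasDerivAt (fun τ : ℝ => ((τ, c) : ℝ × (Fin 3 → ℝ))) ((1:ℝ), (0 : Fin 3 → ℝ)) t :=
    (hasDerivAt_id t).prodMk (hasDerivAt_const t c)
  exact (hg (t, c)).hasFDerivAt.comp_hasDerivAt t hγ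

/-! ### Integration by parts on the periodic square -/

lemma veq (x : Fin 2 → ℝ) : ![x 0, x 1] = x := by
  funext i; fin_cases i <;> simp

lemma cont_vec : Continuous (fun z : ℝ × ℝ => ![z.1, z.2]) := by
  apply continuous_pi; intro i; fin_cases i <;> simp [continuous_fst, continuous_snd]

lemma curve0 (b : ℝ) (f : (Fin 2 → ℝ) → ℝ) (hf : Differentiable ℝ f) (a : ℝ) :
    HasDerivAt (fun a => f ![a, b]) (fderiv ℝ f ![a, b] (Pi.single 0 1)) a := by
  have hc : HasDerivAt (fun a : ℝ => a • (Pi.single 0 1 : Fin 2 → ℝ) + Pi.single 1 b)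
      (Pi.single 0 1) a := by
    simpa using ((hasDerivAt_id a).smul_const (Pi.single 0 1 : Fin 2 → ℝ)).add_const
      (Pi.single 1 b)
  have he : (fun a : ℝ => a • (Pi.single 0 1 : Fin 2 → ℝ) + Pi.single 1 b)
      = fun a : ℝ => ![a, b] := by
    funext a; funext i; fin_cases i <;> simp [Pi.single_apply]
  rw [he] at hc
  exact (hf ![a, b]).hasFDerivAt.comp_hasDerivAt a hc

lemma curve1 (a : ℝ) (f : (Fin 2 → ℝ) → ℝ) (hf : Differentiable ℝ f) (b : ℝ) :
    HasDerivAt (fun b => f ![a, b]) (fderiv ℝ f ![a, b] (Pi.single 1 1)) b := by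
  have hc : HasDerivAt (fun b : ℝ => b • (Pi.single 1 1 : Fin 2 → ℝ) + Pi.single 0 a)
      (Pi.single 1 1) b := by
    simpa using ((hasDerivAt_id b).smul_const (Pi.single 1 1 : Fin 2 → ℝ)).add_const
      (Pi.single 0 a)
  have he : (fun b : ℝ => b • (Pi.single 1 1 : Fin 2 → ℝ) + Pi.single 0 a)
      = fun b : ℝ => ![a, b] := by
    funext b; funext i; fin_cases i <;> simp [Pi.single_apply]
  rw [he] at hc
  exact (hf ![a, b]).hasFDerivAt.comp_hasDerivAt b hc

lemma ibp (f : (Fin 2 → ℝ) → ℝ) (hf : ContDiff ℝ 1 f)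
    (hper : ∀ (x : Fin 2 → ℝ) (j : Fin 2), f (x + Pi.single j (2*Real.pi)) = f x)
    (j : Fin 2) :
    ∫ x in Q2, fderiv ℝ f x (Pi.single j 1) = 0 := by
  have hdf : Differentiable ℝ f := hf.differentiable one_ne_zero
  have hcont : ∀ v : Fin 2 → ℝ, Continuous (fun z : ℝ × ℝ => fderiv ℝ f ![z.1, z.2] v) :=
    fun v => ((hf.continuous_fderiv one_ne_zero).comp cont_vec).clm_apply continuous_const
  set s : Set ℝ := Set.Icc 0 (2*Real.pi) with hs
  have hpi : (0:ℝ) ≤ 2*Real.pi := by positivity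
  have ftc0 : ∀ b : ℝ, (∫ a in s, fderiv ℝ f ![a, b] (Pi.single 0 1)) = 0 := by
    intro b
    rw [hs, MeasureTheory.integral_Icc_eq_integral_Ioc, ← intervalIntegral.integral_of_le hpi,
      intervalIntegral.integral_eq_sub_of_hasDerivAt
        (fun a _ => curve0 b f hdf a)
        (((hcont (Pi.single 0 1)).comp (continuous_id.prodMk continuous_const)).intervalIntegrable 0 (2*Real.pi))]
    have : (![2*Real.pi, b] : Fin 2 → ℝ) = ![(0:ℝ), b] + Pi.single 0 (2*Real.pi) := by
      funext i; fin_cases i <;> simp [Pi.single_apply]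
    rw [this, hper _ 0, sub_self]
  have ftc1 : ∀ a : ℝ, (∫ b in s, fderiv ℝ f ![a, b] (Pi.single 1 1)) = 0 := by
    intro a
    rw [hs, MeasureTheory.integral_Icc_eq_integral_Ioc, ← intervalIntegral.integral_of_le hpi,
      intervalIntegral.integral_eq_sub_of_hasDerivAt
        (fun b _ => curve1 a f hdf b)
        (((hcont (Pi.single 1 1)).comp (continuous_const.prodMk continuous_id)).intervalIntegrable 0 (2*Real.pi))]
    have : (![a, 2*Real.pi] : Fin 2 → ℝ) = ![a, (0:ℝ)] + Pi.single 1 (2*Real.pi) := by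
      funext i; fin_cases i <;> simp [Pi.single_apply]
    rw [this, hper _ 1, sub_self]
  have hpre : (MeasurableEquiv.finTwoArrow : (Fin 2 → ℝ) ≃ᵐ ℝ × ℝ) ⁻¹' (s ×ˢ s) = Q2 := by
    ext x
    simp [Q2, MeasurableEquiv.finTwoArrow, Set.mem_Icc, Pi.le_def, Fin.forall_fin_two, hs,
      Set.mem_prod, and_assoc, Prod.le_def]
  have key : (∫ x in Q2, fderiv ℝ f x (Pi.single j 1))
      = ∫ z in s ×ˢ s, fderiv ℝ f ![z.1, z.2] (Pi.single j 1) := by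
    rw [← hpre]
    rw [← (volume_preserving_finTwoArrow ℝ).setIntegral_preimage_emb
      (MeasurableEquiv.measurableEmbedding _)
      (fun z => fderiv ℝ f ![z.1, z.2] (Pi.single j 1)) (s ×ˢ s)]
    apply setIntegral_congr_fun ((MeasurableEquiv.measurable _) (measurableSet_Icc.prod measurableSet_Icc))
    intro x _
    simp [MeasurableEquiv.finTwoArrow, veq]
  have hint : IntegrableOn (fun z : ℝ × ℝ => fderiv ℝ f ![z.1, z.2] (Pi.single j 1)) (s ×ˢ s) :=
    ((hcont _).continuousOn).integrableOn_compact (isCompact_Icc.prod isCompact_Icc)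
  rw [key]
  rw [Measure.volume_eq_prod, MeasureTheory.setIntegral_prod _ hint]
  fin_cases j
  · have hswap : (∫ a in s, ∫ b in s, fderiv ℝ f ![a, b] (Pi.single 0 1))
        = ∫ b in s, ∫ a in s, fderiv ℝ f ![a, b] (Pi.single 0 1) := by
      apply MeasureTheory.integral_integral_swap
      rw [Measure.prod_restrict]
      exact hint
    show (∫ a in s, ∫ b in s, fderiv ℝ f ![a, b] (Pi.single 0 1)) = 0
    rw [hswap]
    simp [ftc0]
  · show (∫ a in s, ∫ b in s, fderiv ℝ f ![a, b] (Pi.single 1 1)) = 0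
    simp [ftc1]

/-! ### Differentiation under the integral sign -/

lemma cont_pair : Continuous (fun p : ℝ × (Fin 2 → ℝ) => ((p.1, emb p.2 1) : ℝ × (Fin 3 → ℝ))) := by
  have : Continuous (fun p : ℝ × (Fin 2 → ℝ) => ((p.1, M p.2 + Pi.single 2 1) : ℝ × (Fin 3 → ℝ))) :=
    continuous_fst.prodMk ((M.continuous.comp continuous_snd).add continuous_const)
  simpa [emb_eq] using this

lemma deriv_under (g : ℝ × (Fin 3 → ℝ) → ℝ) (hg : ContDiff ℝ 1 g) (t : ℝ) :
    HasDerivAt (fun τ => ∫ y in Q2, g (τ, emb y 1)) (∫ y in Q2, pt g (t, emb y 1)) t := by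
  have hdg : Differentiable ℝ g := hg.differentiable one_ne_zero
  have hcontg : ∀ τ : ℝ, Continuous (fun y => g (τ, emb y 1)) := by
    intro τ
    exact hg.continuous.comp (cont_pair.comp (continuous_const.prodMk continuous_id))
  have hcont' : Continuous (fun p : ℝ × (Fin 2 → ℝ) => pt g (p.1, emb p.2 1)) :=
    ((hg.continuous_fderiv one_ne_zero).comp cont_pair).clm_apply continuous_const
  have hK : IsCompact ((Set.Icc (t-1) (t+1)) ×ˢ Q2) := isCompact_Icc.prod isCompact_Icc
  obtain ⟨C, hC⟩ := hK.exists_bound_of_continuousOn hcont'.continuousOn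
  have hQm : MeasurableSet Q2 := measurableSet_Icc
  have main := hasDerivAt_integral_of_dominated_loc_of_deriv_le
    (F := fun τ y => g (τ, emb y 1)) (F' := fun τ y => pt g (τ, emb y 1))
    (μ := volume.restrict Q2) (x₀ := t) (bound := fun _ => C)
    (s := Metric.ball t 1) (Metric.ball_mem_nhds t one_pos)
    (Filter.Eventually.of_forall fun τ => (hcontg τ).aestronglyMeasurable)
    (((hcontg t).continuousOn).integrableOn_compact isCompact_Icc)
    ((hcont'.comp (continuous_const.prodMk continuous_id)).aestronglyMeasurable)
    (ae_restrict_of_forall_mem hQm (fun y hy τ hτ => by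
      have h1 : τ ∈ Set.Icc (t-1) (t+1) := by
        have := Metric.mem_ball.1 hτ
        rw [Real.dist_eq] at this
        constructor <;> [linarith [abs_lt.1 this |>.1]; linarith [abs_lt.1 this |>.2]]
      exact hC (τ, y) ⟨h1, hy⟩))
    (integrableOn_const isCompact_Icc.measure_lt_top.ne)
    (ae_restrict_of_forall_mem hQm (fun y _ τ _ => hasDerivAt_slice_t g hdg (emb y 1) τ))
  exact main.2

/-! ### Calculus helpers on the 2-torus slice -/

lemma fderiv_translate {F : (Fin 2 → ℝ) → ℝ} (hF : Differentiable ℝ F) (c : Fin 2 → ℝ)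
    (hp : ∀ y, F (y + c) = F y) (y : Fin 2 → ℝ) : fderiv ℝ F (y + c) = fderiv ℝ F y := by
  have h1 : HasFDerivAt (fun y : Fin 2 → ℝ => F (y + c)) (fderiv ℝ F (y + c)) y := by
    have := (hF (y + c)).hasFDerivAt.comp y ((hasFDerivAt_id y).add_const c)
    exact this
  have h2 : HasFDerivAt F (fderiv ℝ F (y + c)) y := by
    have he : (fun y : Fin 2 → ℝ => F (y + c)) = F := funext hp
    rwa [he] at h1
  rw [← h2.fderiv]

lemma fderiv_mul_apply {φ ψ : (Fin 2 → ℝ) → ℝ} (hφ : Differentiable ℝ φ)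
    (hψ : Differentiable ℝ ψ) (y v : Fin 2 → ℝ) :
    fderiv ℝ (fun y => φ y * ψ y) y v
      = fderiv ℝ φ y v * ψ y + φ y * fderiv ℝ ψ y v := by
  rw [fderiv_fun_mul (hφ y) (hψ y)]
  simp [smul_eq_mul]
  ring

lemma fderiv_fderiv_apply {ψ : (Fin 2 → ℝ) → ℝ} (hψ : ContDiff ℝ 2 ψ) (y v w : Fin 2 → ℝ) :
    fderiv ℝ (fun y => fderiv ℝ ψ y v) y w = fderiv ℝ (fderiv ℝ ψ) y w v := by
  have hd : DifferentiableAt ℝ (fderiv ℝ ψ) y :=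
    ((hψ.fderiv_right (m := 1) (by norm_num)).differentiable one_ne_zero) y
  rw [fderiv_clm_apply hd (differentiableAt_const v)]
  simp

lemma sym2 {ψ : (Fin 2 → ℝ) → ℝ} (hψ : ContDiff ℝ 2 ψ) (y v w : Fin 2 → ℝ) :
    fderiv ℝ (fderiv ℝ ψ) y v w = fderiv ℝ (fderiv ℝ ψ) y w v := by
  have hdψ : Differentiable ℝ ψ := hψ.differentiable (by norm_num)
  have hd : DifferentiableAt ℝ (fderiv ℝ ψ) y :=
    ((hψ.fderiv_right (m := 1) (by norm_num)).differentiable one_ne_zero) y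
  exact second_derivative_symmetric (fun z => (hdψ z).hasFDerivAt) hd.hasFDerivAt v w

lemma curl_div {φ ψ : (Fin 2 → ℝ) → ℝ} (hφ : ContDiff ℝ 2 φ) (hψ : ContDiff ℝ 2 ψ)
    (y : Fin 2 → ℝ) :
    fderiv ℝ (fun y => φ y * fderiv ℝ ψ y (Pi.single 1 1)) y (Pi.single 0 1)
      - fderiv ℝ (fun y => φ y * fderiv ℝ ψ y (Pi.single 0 1)) y (Pi.single 1 1)
    = fderiv ℝ φ y (Pi.single 0 1) * fderiv ℝ ψ y (Pi.single 1 1)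
      - fderiv ℝ φ y (Pi.single 1 1) * fderiv ℝ ψ y (Pi.single 0 1) := by
  have hdφ : Differentiable ℝ φ := hφ.differentiable (by norm_num)
  have hDψ : ∀ v : Fin 2 → ℝ, Differentiable ℝ (fun y => fderiv ℝ ψ y v) := by
    intro v
    exact ((hψ.fderiv_right (m := 1) (by norm_num)).clm_apply contDiff_const).differentiable one_ne_zero
  rw [fderiv_mul_apply hdφ (hDψ _), fderiv_mul_apply hdφ (hDψ _),
    fderiv_fderiv_apply hψ, fderiv_fderiv_apply hψ,
    sym2 hψ y (Pi.single 0 1) (Pi.single 1 1)]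
  ring

lemma cs0 : Fin.castSucc (0 : Fin 2) = (0 : Fin 3) := rfl
lemma cs1 : Fin.castSucc (1 : Fin 2) = (1 : Fin 3) := rfl

lemma master (ω ζ u h : ℝ × (Fin 3 → ℝ) → Fin 3 → ℝ)
    (hω : ContDiff ℝ 1 ω) (hζ : ContDiff ℝ 1 ζ)
    (hu : ContDiff ℝ 2 u) (hh : ContDiff ℝ 2 h)
    (hperω : Per3 ω) (hperζ : Per3 ζ) (hperu : Per3 u) (hperh : Per3 h)
    (heq : ∀ p : ℝ × (Fin 3 → ℝ), p.2 2 ∈ Set.Icc (-1 : ℝ) 1 → ∀ i : Fin 3,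
      pt (fun q => ζ q i) p
        + ∑ j : Fin 3, (u p j * pxi j (fun q => ζ q i) p
            - h p j * pxi j (fun q => ω q i) p)
      = (∑ j : Fin 3, (ζ p j * pxi j (fun q => u q i) p
            - ω p j * pxi j (fun q => h q i) p))
        - 2 * ∑ l : Fin 3, ∑ j : Fin 3, ∑ k : Fin 3,
            levi i j k * pxi j (fun q => u q l) p * pxi k (fun q => h q l) p)
    (hdivu : ∀ p : ℝ × (Fin 3 → ℝ), p.2 2 ∈ Set.Icc (-1 : ℝ) 1 →
      (∑ i : Fin 3, pxi i (fun q => u q i) p) = 0)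
    (hdivh : ∀ p : ℝ × (Fin 3 → ℝ), p.2 2 ∈ Set.Icc (-1 : ℝ) 1 →
      (∑ i : Fin 3, pxi i (fun q => h q i) p) = 0)
    (hbu : ∀ (t : ℝ) (x' : Fin 2 → ℝ), u (t, emb x' 1) 2 = 0)
    (hbh : ∀ (t : ℝ) (x' : Fin 2 → ℝ), h (t, emb x' 1) 2 = 0) (t : ℝ) :
    ((∫ y in Q2, pt (fun q => ζ q 2) (t, emb y 1)) = 0) ∧
    ((∫ x' in Q2, (∑ i : Fin 3,
        (pxi 0 (fun q => u q i) (t, emb x' 1) * pxi 1 (fun q => h q i) (t, emb x' 1)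
          - pxi 1 (fun q => u q i) (t, emb x' 1)
            * pxi 0 (fun q => h q i) (t, emb x' 1)))) = 0) := by
  have hQm : MeasurableSet Q2 := measurableSet_Icc
  have two_pos : ((1:WithTop ℕ∞) ≤ 2) := by norm_num
  -- component regularity
  have huC : ∀ i : Fin 3, ContDiff ℝ 2 (fun q => u q i) := fun i => contDiff_pi.1 hu i
  have hhC : ∀ i : Fin 3, ContDiff ℝ 2 (fun q => h q i) := fun i => contDiff_pi.1 hh i
  have hζC : ∀ i : Fin 3, ContDiff ℝ 1 (fun q => ζ q i) := fun i => contDiff_pi.1 hζ i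
  have hωC : ∀ i : Fin 3, ContDiff ℝ 1 (fun q => ω q i) := fun i => contDiff_pi.1 hω i
  have hud : ∀ i : Fin 3, Differentiable ℝ (fun q => u q i) :=
    fun i => (huC i).differentiable two_ne_zero
  have hhd : ∀ i : Fin 3, Differentiable ℝ (fun q => h q i) :=
    fun i => (hhC i).differentiable two_ne_zero
  have hζd : ∀ i : Fin 3, Differentiable ℝ (fun q => ζ q i) :=
    fun i => (hζC i).differentiable one_ne_zero
  have hωd : ∀ i : Fin 3, Differentiable ℝ (fun q => ω q i) :=
    fun i => (hωC i).differentiable one_ne_zero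
  -- sliced functions
  set Φu : Fin 3 → (Fin 2 → ℝ) → ℝ := fun l y => u (t, emb y 1) l with hΦudef
  set Φh : Fin 3 → (Fin 2 → ℝ) → ℝ := fun l y => h (t, emb y 1) l with hΦhdef
  set Z : (Fin 2 → ℝ) → ℝ := fun y => ζ (t, emb y 1) 2 with hZdef
  set W : (Fin 2 → ℝ) → ℝ := fun y => ω (t, emb y 1) 2 with hWdef
  have hΦu : ∀ l, ContDiff ℝ 2 (Φu l) := fun l => slice_comp _ (huC l) t
  have hΦh : ∀ l, ContDiff ℝ 2 (Φh l) := fun l => slice_comp _ (hhC l) t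
  have hZC : ContDiff ℝ 1 Z := slice_comp _ (hζC 2) t
  have hWC : ContDiff ℝ 1 W := slice_comp _ (hωC 2) t
  have hΦud : ∀ l, Differentiable ℝ (Φu l) := fun l => (hΦu l).differentiable two_ne_zero
  have hΦhd : ∀ l, Differentiable ℝ (Φh l) := fun l => (hΦh l).differentiable two_ne_zero
  have hZd : Differentiable ℝ Z := hZC.differentiable one_ne_zero
  have hWd : Differentiable ℝ W := hWC.differentiable one_ne_zero
  -- periodicity of slices
  have perΦu : ∀ l (y : Fin 2 → ℝ) (j : Fin 2), Φu l (y + Pi.single j (2*Real.pi)) = Φu l y := by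
    intro l y j
    show u (t, emb (y + Pi.single j (2*Real.pi)) 1) l = u (t, emb y 1) l
    rw [emb_add]
    exact congrFun (hperu t (emb y 1) j) l
  have perΦh : ∀ l (y : Fin 2 → ℝ) (j : Fin 2), Φh l (y + Pi.single j (2*Real.pi)) = Φh l y := by
    intro l y j
    show h (t, emb (y + Pi.single j (2*Real.pi)) 1) l = h (t, emb y 1) l
    rw [emb_add]
    exact congrFun (hperh t (emb y 1) j) l
  have perZ : ∀ (y : Fin 2 → ℝ) (j : Fin 2), Z (y + Pi.single j (2*Real.pi)) = Z y := by
    intro y j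
    show ζ (t, emb (y + Pi.single j (2*Real.pi)) 1) 2 = ζ (t, emb y 1) 2
    rw [emb_add]
    exact congrFun (hperζ t (emb y 1) j) 2
  have perW : ∀ (y : Fin 2 → ℝ) (j : Fin 2), W (y + Pi.single j (2*Real.pi)) = W y := by
    intro y j
    show ω (t, emb (y + Pi.single j (2*Real.pi)) 1) 2 = ω (t, emb y 1) 2
    rw [emb_add]
    exact congrFun (hperω t (emb y 1) j) 2
  -- the six flux functions
  set F1 : (Fin 2 → ℝ) → ℝ := fun y => Φu 0 y * Z y with hF1def
  set F2 : (Fin 2 → ℝ) → ℝ := fun y => Φu 1 y * Z y with hF2def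
  set F3 : (Fin 2 → ℝ) → ℝ := fun y => Φh 0 y * W y with hF3def
  set F4 : (Fin 2 → ℝ) → ℝ := fun y => Φh 1 y * W y with hF4def
  set G : (Fin 2 → ℝ) → ℝ := fun y => ∑ l : Fin 3, Φu l y * fderiv ℝ (Φh l) y (Pi.single 1 1)
    with hGdef
  set Hn : (Fin 2 → ℝ) → ℝ := fun y => ∑ l : Fin 3, Φu l y * fderiv ℝ (Φh l) y (Pi.single 0 1)
    with hHndef
  have hDΦh : ∀ l (v : Fin 2 → ℝ), ContDiff ℝ 1 (fun y => fderiv ℝ (Φh l) y v) :=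
    fun l v => ((hΦh l).fderiv_right (le_refl _)).clm_apply contDiff_const
  have hF1C : ContDiff ℝ 1 F1 := ((hΦu 0).of_le two_pos).mul hZC
  have hF2C : ContDiff ℝ 1 F2 := ((hΦu 1).of_le two_pos).mul hZC
  have hF3C : ContDiff ℝ 1 F3 := ((hΦh 0).of_le two_pos).mul hWC
  have hF4C : ContDiff ℝ 1 F4 := ((hΦh 1).of_le two_pos).mul hWC
  have hGC : ContDiff ℝ 1 G :=
    ContDiff.sum fun l _ => ((hΦu l).of_le two_pos).mul (hDΦh l _)
  have hHnC : ContDiff ℝ 1 Hn :=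
    ContDiff.sum fun l _ => ((hΦu l).of_le two_pos).mul (hDΦh l _)
  have perF1 : ∀ (y : Fin 2 → ℝ) (j : Fin 2), F1 (y + Pi.single j (2*Real.pi)) = F1 y :=
    fun y j => by show Φu 0 _ * Z _ = _; rw [perΦu, perZ]
  have perF2 : ∀ (y : Fin 2 → ℝ) (j : Fin 2), F2 (y + Pi.single j (2*Real.pi)) = F2 y :=
    fun y j => by show Φu 1 _ * Z _ = _; rw [perΦu, perZ]
  have perF3 : ∀ (y : Fin 2 → ℝ) (j : Fin 2), F3 (y + Pi.single j (2*Real.pi)) = F3 y :=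
    fun y j => by show Φh 0 _ * W _ = _; rw [perΦh, perW]
  have perF4 : ∀ (y : Fin 2 → ℝ) (j : Fin 2), F4 (y + Pi.single j (2*Real.pi)) = F4 y :=
    fun y j => by show Φh 1 _ * W _ = _; rw [perΦh, perW]
  have perG : ∀ (y : Fin 2 → ℝ) (j : Fin 2), G (y + Pi.single j (2*Real.pi)) = G y := by
    intro y j
    show (∑ l : Fin 3, Φu l _ * fderiv ℝ (Φh l) _ (Pi.single 1 1)) = _
    refine Finset.sum_congr rfl fun l _ => ?_
    rw [perΦu, fderiv_translate (hΦhd l) _ (fun y => perΦh l y j)]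
  have perHn : ∀ (y : Fin 2 → ℝ) (j : Fin 2), Hn (y + Pi.single j (2*Real.pi)) = Hn y := by
    intro y j
    show (∑ l : Fin 3, Φu l _ * fderiv ℝ (Φh l) _ (Pi.single 0 1)) = _
    refine Finset.sum_congr rfl fun l _ => ?_
    rw [perΦu, fderiv_translate (hΦhd l) _ (fun y => perΦh l y j)]
  -- point membership
  have hmem : ∀ y : Fin 2 → ℝ, ((t, emb y 1) : ℝ × (Fin 3 → ℝ)).2 2 ∈ Set.Icc (-1:ℝ) 1 := by
    intro y
    constructor <;> norm_num [emb, Matrix.cons_val_two, Matrix.vecHead, Matrix.vecTail]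
  -- boundary-derivative vanishing
  have hbu0 : ∀ (y : Fin 2 → ℝ) (j : Fin 2),
      pxi (Fin.castSucc j) (fun q => u q 2) (t, emb y 1) = 0 := by
    intro y j
    rw [← pderiv_slice _ (hud 2) t y j]
    have he : (fun y : Fin 2 → ℝ => u (t, emb y 1) 2) = fun _ => (0:ℝ) :=
      funext fun y => hbu t y
    rw [he, fderiv_fun_const]
    simp
  have hbh0 : ∀ (y : Fin 2 → ℝ) (j : Fin 2),
      pxi (Fin.castSucc j) (fun q => h q 2) (t, emb y 1) = 0 := by
    intro y j
    rw [← pderiv_slice _ (hhd 2) t y j]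
    have he : (fun y : Fin 2 → ℝ => h (t, emb y 1) 2) = fun _ => (0:ℝ) :=
      funext fun y => hbh t y
    rw [he, fderiv_fun_const]
    simp
  -- derivative expansions of the flux functions
  have e1 : ∀ y, fderiv ℝ F1 y (Pi.single 0 1)
      = pxi 0 (fun q => u q 0) (t, emb y 1) * ζ (t, emb y 1) 2
        + u (t, emb y 1) 0 * pxi 0 (fun q => ζ q 2) (t, emb y 1) := by
    intro y
    rw [hF1def]
    rw [fderiv_mul_apply (fun y => (hΦud 0 y)) (fun y => hZd y)]
    rw [hΦudef, hZdef]
    rw [pderiv_slice _ (hud 0) t y 0, pderiv_slice _ (hζd 2) t y 0, cs0]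
  have e2 : ∀ y, fderiv ℝ F2 y (Pi.single 1 1)
      = pxi 1 (fun q => u q 1) (t, emb y 1) * ζ (t, emb y 1) 2
        + u (t, emb y 1) 1 * pxi 1 (fun q => ζ q 2) (t, emb y 1) := by
    intro y
    rw [hF2def]
    rw [fderiv_mul_apply (fun y => (hΦud 1 y)) (fun y => hZd y)]
    rw [hΦudef, hZdef]
    rw [pderiv_slice _ (hud 1) t y 1, pderiv_slice _ (hζd 2) t y 1, cs1]
  have e3 : ∀ y, fderiv ℝ F3 y (Pi.single 0 1)
      = pxi 0 (fun q => h q 0) (t, emb y 1) * ω (t, emb y 1) 2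
        + h (t, emb y 1) 0 * pxi 0 (fun q => ω q 2) (t, emb y 1) := by
    intro y
    rw [hF3def]
    rw [fderiv_mul_apply (fun y => (hΦhd 0 y)) (fun y => hWd y)]
    rw [hΦhdef, hWdef]
    rw [pderiv_slice _ (hhd 0) t y 0, pderiv_slice _ (hωd 2) t y 0, cs0]
  have e4 : ∀ y, fderiv ℝ F4 y (Pi.single 1 1)
      = pxi 1 (fun q => h q 1) (t, emb y 1) * ω (t, emb y 1) 2
        + h (t, emb y 1) 1 * pxi 1 (fun q => ω q 2) (t, emb y 1) := by
    intro y
    rw [hF4def]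
    rw [fderiv_mul_apply (fun y => (hΦhd 1 y)) (fun y => hWd y)]
    rw [hΦhdef, hWdef]
    rw [pderiv_slice _ (hhd 1) t y 1, pderiv_slice _ (hωd 2) t y 1, cs1]
  have eG : ∀ y, fderiv ℝ G y (Pi.single 0 1) - fderiv ℝ Hn y (Pi.single 1 1)
      = ∑ l : Fin 3, (pxi 0 (fun q => u q l) (t, emb y 1) * pxi 1 (fun q => h q l) (t, emb y 1)
          - pxi 1 (fun q => u q l) (t, emb y 1) * pxi 0 (fun q => h q l) (t, emb y 1)) := by
    intro y
    rw [hGdef, hHndef]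
    rw [fderiv_fun_sum (A := fun l y => Φu l y * fderiv ℝ (Φh l) y (Pi.single 1 1)) (fun l _ => ((hΦud l y).mul (((hDΦh l _).differentiable one_ne_zero) y))),
      fderiv_fun_sum (A := fun l y => Φu l y * fderiv ℝ (Φh l) y (Pi.single 0 1)) (fun l _ => ((hΦud l y).mul (((hDΦh l _).differentiable one_ne_zero) y))),
      ContinuousLinearMap.sum_apply, ContinuousLinearMap.sum_apply,
      ← Finset.sum_sub_distrib]
    refine Finset.sum_congr rfl fun l _ => ?_
    rw [curl_div (hΦu l) (hΦh l) y]
    rw [hΦudef, hΦhdef]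
    rw [pderiv_slice _ (hud l) t y 0, pderiv_slice _ (hud l) t y 1,
      pderiv_slice _ (hhd l) t y 0, pderiv_slice _ (hhd l) t y 1, cs0, cs1]
  -- pointwise main identity
  have main_pt : ∀ y, pt (fun q => ζ q 2) (t, emb y 1)
      = (((-(fderiv ℝ F1 y (Pi.single 0 1)) - fderiv ℝ F2 y (Pi.single 1 1))
          + fderiv ℝ F3 y (Pi.single 0 1)) + fderiv ℝ F4 y (Pi.single 1 1))
        - 2*(fderiv ℝ G y (Pi.single 0 1) - fderiv ℝ Hn y (Pi.single 1 1)) := by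
    intro y
    have heqy := heq (t, emb y 1) (hmem y) 2
    have hdu := hdivu (t, emb y 1) (hmem y)
    have hdh := hdivh (t, emb y 1) (hmem y)
    have hb1 : pxi 0 (fun q => u q 2) (t, emb y 1) = 0 := by rw [← cs0]; exact hbu0 y 0
    have hb2 : pxi 1 (fun q => u q 2) (t, emb y 1) = 0 := by rw [← cs1]; exact hbu0 y 1
    have hb3 : pxi 0 (fun q => h q 2) (t, emb y 1) = 0 := by rw [← cs0]; exact hbh0 y 0
    have hb4 : pxi 1 (fun q => h q 2) (t, emb y 1) = 0 := by rw [← cs1]; exact hbh0 y 1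
    simp only [Fin.sum_univ_three] at heqy hdu hdh
    rw [hbu t y, hbh t y, hb1, hb2, hb3, hb4] at heqy
    norm_num [levi] at heqy
    rw [e1 y, e2 y, e3 y, e4 y, eG y]
    simp only [Fin.sum_univ_three]
    rw [hb1, hb2, hb3, hb4]
    linear_combination heqy + ζ (t, emb y 1) 2 * hdu - ω (t, emb y 1) 2 * hdh
  -- integrability of the derivative integrands
  have intD : ∀ (F : (Fin 2 → ℝ) → ℝ), ContDiff ℝ 1 F → ∀ v : Fin 2 → ℝ,
      IntegrableOn (fun y => fderiv ℝ F y v) Q2 volume := fun F hF v =>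
    (((hF.continuous_fderiv one_ne_zero).clm_apply continuous_const).continuousOn).integrableOn_compact
      isCompact_Icc
  have i1 := intD F1 hF1C (Pi.single 0 1)
  have i2 := intD F2 hF2C (Pi.single 1 1)
  have i3 := intD F3 hF3C (Pi.single 0 1)
  have i4 := intD F4 hF4C (Pi.single 1 1)
  have i5 := intD G hGC (Pi.single 0 1)
  have i6 := intD Hn hHnC (Pi.single 1 1)
  have z1 := ibp F1 hF1C perF1 0
  have z2 := ibp F2 hF2C perF2 1
  have z3 := ibp F3 hF3C perF3 0
  have z4 := ibp F4 hF4C perF4 1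
  have z5 := ibp G hGC perG 0
  have z6 := ibp Hn hHnC perHn 1
  constructor
  · have hfun : (fun y => pt (fun q => ζ q 2) (t, emb y 1))
        = fun y => (((-(fderiv ℝ F1 y (Pi.single 0 1)) - fderiv ℝ F2 y (Pi.single 1 1))
            + fderiv ℝ F3 y (Pi.single 0 1)) + fderiv ℝ F4 y (Pi.single 1 1))
          - 2*(fderiv ℝ G y (Pi.single 0 1) - fderiv ℝ Hn y (Pi.single 1 1)) := funext main_pt
    have sA : (∫ y in Q2, ((((-(fderiv ℝ F1 y (Pi.single 0 1)) - fderiv ℝ F2 y (Pi.single 1 1))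
            + fderiv ℝ F3 y (Pi.single 0 1)) + fderiv ℝ F4 y (Pi.single 1 1))
          - 2*(fderiv ℝ G y (Pi.single 0 1) - fderiv ℝ Hn y (Pi.single 1 1))))
        = (∫ y in Q2, (((-(fderiv ℝ F1 y (Pi.single 0 1)) - fderiv ℝ F2 y (Pi.single 1 1))
            + fderiv ℝ F3 y (Pi.single 0 1)) + fderiv ℝ F4 y (Pi.single 1 1)))
          - ∫ y in Q2, 2*(fderiv ℝ G y (Pi.single 0 1) - fderiv ℝ Hn y (Pi.single 1 1)) :=
      MeasureTheory.integral_sub (((i1.neg.sub i2).add i3).add i4) ((i5.sub i6).const_mul 2)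
    have sB : (∫ y in Q2, (((-(fderiv ℝ F1 y (Pi.single 0 1)) - fderiv ℝ F2 y (Pi.single 1 1))
            + fderiv ℝ F3 y (Pi.single 0 1)) + fderiv ℝ F4 y (Pi.single 1 1)))
        = (∫ y in Q2, ((-(fderiv ℝ F1 y (Pi.single 0 1)) - fderiv ℝ F2 y (Pi.single 1 1))
            + fderiv ℝ F3 y (Pi.single 0 1))) + ∫ y in Q2, fderiv ℝ F4 y (Pi.single 1 1) :=
      MeasureTheory.integral_add ((i1.neg.sub i2).add i3) i4
    have sC : (∫ y in Q2, ((-(fderiv ℝ F1 y (Pi.single 0 1)) - fderiv ℝ F2 y (Pi.single 1 1))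
            + fderiv ℝ F3 y (Pi.single 0 1)))
        = (∫ y in Q2, (-(fderiv ℝ F1 y (Pi.single 0 1)) - fderiv ℝ F2 y (Pi.single 1 1)))
          + ∫ y in Q2, fderiv ℝ F3 y (Pi.single 0 1) :=
      MeasureTheory.integral_add (i1.neg.sub i2) i3
    have sD : (∫ y in Q2, (-(fderiv ℝ F1 y (Pi.single 0 1)) - fderiv ℝ F2 y (Pi.single 1 1)))
        = (∫ y in Q2, -(fderiv ℝ F1 y (Pi.single 0 1))) - ∫ y in Q2, fderiv ℝ F2 y (Pi.single 1 1) :=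
      MeasureTheory.integral_sub i1.neg i2
    have sE : (∫ y in Q2, -(fderiv ℝ F1 y (Pi.single 0 1)))
        = -(∫ y in Q2, fderiv ℝ F1 y (Pi.single 0 1)) := MeasureTheory.integral_neg _
    have sF : (∫ y in Q2, 2*(fderiv ℝ G y (Pi.single 0 1) - fderiv ℝ Hn y (Pi.single 1 1)))
        = 2*(∫ y in Q2, (fderiv ℝ G y (Pi.single 0 1) - fderiv ℝ Hn y (Pi.single 1 1))) :=
      MeasureTheory.integral_const_mul _ _
    have sG : (∫ y in Q2, (fderiv ℝ G y (Pi.single 0 1) - fderiv ℝ Hn y (Pi.single 1 1)))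
        = (∫ y in Q2, fderiv ℝ G y (Pi.single 0 1)) - ∫ y in Q2, fderiv ℝ Hn y (Pi.single 1 1) :=
      MeasureTheory.integral_sub i5 i6
    rw [hfun, sA, sB, sC, sD, sE, sF, sG, z1, z2, z3, z4, z5, z6]
    ring
  · have hfun2 : (fun x' => ∑ i : Fin 3,
        (pxi 0 (fun q => u q i) (t, emb x' 1) * pxi 1 (fun q => h q i) (t, emb x' 1)
          - pxi 1 (fun q => u q i) (t, emb x' 1) * pxi 0 (fun q => h q i) (t, emb x' 1)))
        = fun y => fderiv ℝ G y (Pi.single 0 1) - fderiv ℝ Hn y (Pi.single 1 1) :=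
      funext fun y => (eG y).symm
    have sG : (∫ y in Q2, (fderiv ℝ G y (Pi.single 0 1) - fderiv ℝ Hn y (Pi.single 1 1)))
        = (∫ y in Q2, fderiv ℝ G y (Pi.single 0 1)) - ∫ y in Q2, fderiv ℝ Hn y (Pi.single 1 1) :=
      MeasureTheory.integral_sub i5 i6
    rw [hfun2, sG, z5, z6, sub_zero]


end Stmt7

/-- Conservation of `∫_{Γ⁺} ξ₃ dx'` for the linearized current equation with
forcing `−2∇u_i × ∇h_i`; in particular the forcing integral
`∫(∂₁u_i ∂₂h_i − ∂₂u_i ∂₁h_i) dx'` vanishes. -/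
theorem stmt7 (ω ζ u h : ℝ × (Fin 3 → ℝ) → Fin 3 → ℝ)
    (hω : ContDiff ℝ 1 ω) (hζ : ContDiff ℝ 1 ζ)
    (hu : ContDiff ℝ 2 u) (hh : ContDiff ℝ 2 h)
    (hperω : Per3 ω) (hperζ : Per3 ζ) (hperu : Per3 u) (hperh : Per3 h)
    (heq : ∀ p : ℝ × (Fin 3 → ℝ), p.2 2 ∈ Set.Icc (-1 : ℝ) 1 → ∀ i : Fin 3,
      pt (fun q => ζ q i) p
        + ∑ j : Fin 3, (u p j * pxi j (fun q => ζ q i) p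
            - h p j * pxi j (fun q => ω q i) p)
      = (∑ j : Fin 3, (ζ p j * pxi j (fun q => u q i) p
            - ω p j * pxi j (fun q => h q i) p))
        - 2 * ∑ l : Fin 3, ∑ j : Fin 3, ∑ k : Fin 3,
            levi i j k * pxi j (fun q => u q l) p * pxi k (fun q => h q l) p)
    (hdivu : ∀ p : ℝ × (Fin 3 → ℝ), p.2 2 ∈ Set.Icc (-1 : ℝ) 1 →
      (∑ i : Fin 3, pxi i (fun q => u q i) p) = 0)
    (hdivh : ∀ p : ℝ × (Fin 3 → ℝ), p.2 2 ∈ Set.Icc (-1 : ℝ) 1 →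
      (∑ i : Fin 3, pxi i (fun q => h q i) p) = 0)
    (hbu : ∀ (t : ℝ) (x' : Fin 2 → ℝ), u (t, emb x' 1) 2 = 0)
    (hbh : ∀ (t : ℝ) (x' : Fin 2 → ℝ), h (t, emb x' 1) 2 = 0) :
    (∀ t : ℝ, HasDerivAt (fun τ => ∫ x' in Q2, ζ (τ, emb x' 1) 2) 0 t)
    ∧ ∀ t : ℝ, (∫ x' in Q2, (∑ i : Fin 3,
        (pxi 0 (fun q => u q i) (t, emb x' 1) * pxi 1 (fun q => h q i) (t, emb x' 1)
          - pxi 1 (fun q => u q i) (t, emb x' 1)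
            * pxi 0 (fun q => h q i) (t, emb x' 1)))) = 0 := by
  refine ⟨fun t => ?_, fun t =>
    (Stmt7.master ω ζ u h hω hζ hu hh hperω hperζ hperu hperh heq hdivu hdivh hbu hbh t).2⟩
  have hd := Stmt7.deriv_under (fun q => ζ q 2) (contDiff_pi.1 hζ 2) t
  rwa [(Stmt7.master ω ζ u h hω hζ hu hh hperω hperζ hperu hperh heq hdivu hdivh hbu hbh
    t).1] at hd
end
end
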